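/- If a knot value is repeated q times the continuity of a degree-p B-spline is reduced to C^{p−q}: let p ∈ ℕ, 1 ≤ q ≤ p, and suppose every real value occurs at most q times among the knots k 0, …, k (n+p) (i.e., for every x ∈ ℝ the set { j ≤ n+p : k j = x } has at most q elements). Then for every i with i + p + 1 ≤ n + p, the B-spline B^{(i,p)} : ℝ → ℝ is (p − q)-times continuously differentiable on all of ℝ. -/

import Mathlib

open Filter Set Topology

/-- Interpolation factor τ(i,q,s) in the Cox–de Boor recursion. -/
noncomputable def coxTau (k : ℕ → ℝ) (i q : ℕ) (s : ℝ) : ℝ :=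
  if k (i + q) ≠ k i then (s - k i) / (k (i + q) - k i) else 0

/-- Interpolation factor σ(i,q,s) in the Cox–de Boor recursion. -/
noncomputable def coxSigma (k : ℕ → ℝ) (i q : ℕ) (s : ℝ) : ℝ :=
  if k (i + q + 1) ≠ k (i + 1) then (k (i + q + 1) - s) / (k (i + q + 1) - k (i + 1)) else 0

/-- The B-spline basis function `Bspline k p i` of degree `p` with index `i`
associated with the knot vector `k`, defined by the Cox–de Boor recursion. -/
noncomputable def Bspline (k : ℕ → ℝ) : ℕ → ℕ → ℝ → ℝ
  | 0, i, s => if k i ≤ s ∧ s < k (i + 1) then 1 else 0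
  | q + 1, i, s =>
      coxTau k i (q + 1) s * Bspline k q i s +
      coxSigma k i (q + 1) s * Bspline k q (i + 1) s

lemma coxTau_continuous (k : ℕ → ℝ) (i q : ℕ) : Continuous (coxTau k i q) := by
  unfold coxTau
  split_ifs with h
  · exact (continuous_id.sub continuous_const).div_const _
  · exact continuous_const

lemma coxSigma_continuous (k : ℕ → ℝ) (i q : ℕ) : Continuous (coxSigma k i q) := by
  unfold coxSigma
  split_ifs with h
  · exact (continuous_const.sub continuous_id).div_const _
  · exact continuous_const

lemma Bspline_continuous_of (k : ℕ → ℝ) (d i : ℕ)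
    (h1 : Continuous (Bspline k d i)) (h2 : Continuous (Bspline k d (i+1))) :
    Continuous (Bspline k (d+1) i) := by
  show Continuous fun s => coxTau k i (d + 1) s * Bspline k d i s +
      coxSigma k i (d + 1) s * Bspline k d (i + 1) s
  exact ((coxTau_continuous k i (d+1)).mul h1).add ((coxSigma_continuous k i (d+1)).mul h2)

lemma Bspline_support (k : ℕ → ℝ) (hk : Monotone k) :
    ∀ (d i : ℕ) (s : ℝ), (s < k i ∨ k (i + d + 1) ≤ s) → Bspline k d i s = 0 := by
  intro d
  induction d with
  | zero =>
    intro i s hs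
    show (if k i ≤ s ∧ s < k (i + 1) then (1:ℝ) else 0) = 0
    rcases hs with h | h
    · rw [if_neg]; rintro ⟨h1, -⟩; linarith
    · rw [if_neg]; rintro ⟨-, h2⟩; simp only [Nat.add_zero] at h ⊢; linarith
  | succ d ih =>
    intro i s hs
    show coxTau k i (d + 1) s * Bspline k d i s +
      coxSigma k i (d + 1) s * Bspline k d (i + 1) s = 0
    have h1 : Bspline k d i s = 0 := by
      apply ih
      rcases hs with h | h
      · exact Or.inl h
      · right; exact le_trans (hk (by omega)) h
    have h2 : Bspline k d (i+1) s = 0 := by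
      apply ih
      rcases hs with h | h
      · exact Or.inl (lt_of_lt_of_le h (hk (by omega)))
      · right; exact le_of_le_of_eq (le_of_eq rfl) (by rw [show i + 1 + d + 1 = i + (d+1) + 1 by omega]) |>.trans h
    rw [h1, h2]; ring

lemma Bspline_zero_of_collapse (k : ℕ → ℝ) (hk : Monotone k) (d i : ℕ)
    (h : k (i + d + 1) = k i) (s : ℝ) : Bspline k d i s = 0 := by
  apply Bspline_support k hk
  rcases lt_or_ge s (k i) with h' | h'
  · exact Or.inl h'
  · right; rw [h]; exact h'

noncomputable def BsplineL (k : ℕ → ℝ) (x : ℝ) : ℕ → ℕ → ℝ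
  | 0, i => if k i < x ∧ x ≤ k (i + 1) then 1 else 0
  | q + 1, i =>
      coxTau k i (q + 1) x * BsplineL k x q i +
      coxSigma k i (q + 1) x * BsplineL k x q (i + 1)

lemma Bspline_right_continuous (k : ℕ → ℝ) (d i : ℕ) (x : ℝ) :
    ContinuousWithinAt (Bspline k d i) (Ici x) x := by
  induction d generalizing i with
  | zero =>
    have : ∀ᶠ s in 𝓝[≥] x, Bspline k 0 i s = Bspline k 0 i x := by
      rcases lt_or_ge x (k (i+1)) with h1 | h1
      · rcases le_or_gt (k i) x with h2 | h2
        · filter_upwards [Ico_mem_nhdsGE_of_mem (by constructor <;> [exact le_refl x; exact h1])]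
            with s hs
          show (if k i ≤ s ∧ s < k (i+1) then (1:ℝ) else 0) = _
          rw [if_pos ⟨le_trans h2 hs.1, hs.2⟩]
          show _ = (if k i ≤ x ∧ x < k (i+1) then (1:ℝ) else 0)
          rw [if_pos ⟨h2, h1⟩]
        · filter_upwards [Ico_mem_nhdsGE_of_mem (by constructor <;> [exact le_refl x; exact h2])]
            with s hs
          show (if k i ≤ s ∧ s < k (i+1) then (1:ℝ) else 0) = _
          rw [if_neg (by rintro ⟨a, -⟩; exact absurd hs.2 (not_lt.2 a))]
          show _ = (if k i ≤ x ∧ x < k (i+1) then (1:ℝ) else 0)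
          rw [if_neg (by rintro ⟨a, -⟩; linarith)]
      · filter_upwards [self_mem_nhdsWithin] with s hs
        show (if k i ≤ s ∧ s < k (i+1) then (1:ℝ) else 0) =
          (if k i ≤ x ∧ x < k (i+1) then (1:ℝ) else 0)
        rw [if_neg (by rintro ⟨-, b⟩; simp only [mem_Ici] at hs; linarith),
          if_neg (by rintro ⟨-, b⟩; linarith)]
    exact (continuousWithinAt_const).congr_of_eventuallyEq this
      (by exact (this.self_of_nhdsWithin (mem_Ici.2 le_rfl)))
  | succ d ih =>
    show ContinuousWithinAt (fun s => coxTau k i (d + 1) s * Bspline k d i s +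
      coxSigma k i (d + 1) s * Bspline k d (i + 1) s) (Ici x) x
    exact (((coxTau_continuous k i (d+1)).continuousWithinAt).mul (ih i)).add
      (((coxSigma_continuous k i (d+1)).continuousWithinAt).mul (ih (i+1)))

lemma Bspline_left_limit (k : ℕ → ℝ) (d i : ℕ) (x : ℝ) :
    Tendsto (Bspline k d i) (𝓝[<] x) (𝓝 (BsplineL k x d i)) := by
  induction d generalizing i with
  | zero =>
    have : ∀ᶠ s in 𝓝[<] x, Bspline k 0 i s = BsplineL k x 0 i := by
      show ∀ᶠ s in 𝓝[<] x, (if k i ≤ s ∧ s < k (i+1) then (1:ℝ) else 0) =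
        (if k i < x ∧ x ≤ k (i+1) then (1:ℝ) else 0)
      by_cases h : k i < x ∧ x ≤ k (i + 1)
      · filter_upwards [Ioo_mem_nhdsLT_of_mem (by constructor <;> [exact h.1; exact le_refl x])]
          with s hs
        rw [if_pos ⟨le_of_lt hs.1, lt_of_lt_of_le hs.2 h.2⟩, if_pos h]
      · rw [not_and_or, not_lt, not_le] at h
        rcases h with h | h
        · filter_upwards [self_mem_nhdsWithin] with s hs
          simp only [mem_Iio] at hs
          rw [if_neg (by rintro ⟨a, -⟩; linarith), if_neg (by rintro ⟨a, -⟩; linarith)]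
        · filter_upwards [Ioo_mem_nhdsLT_of_mem (by constructor <;> [exact h; exact le_refl x])]
            with s hs
          rw [if_neg (by rintro ⟨-, b⟩; exact absurd hs.1 (not_lt.2 (le_of_lt b))),
            if_neg (by rintro ⟨-, b⟩; linarith)]
    exact Tendsto.congr' (this.mono fun s h => h.symm) tendsto_const_nhds
  | succ d ih =>
    have ht : Tendsto (coxTau k i (d+1)) (𝓝[<] x) (𝓝 (coxTau k i (d+1) x)) :=
      ((coxTau_continuous k i (d+1)).continuousAt).continuousWithinAt
    have hs : Tendsto (coxSigma k i (d+1)) (𝓝[<] x) (𝓝 (coxSigma k i (d+1) x)) :=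
      ((coxSigma_continuous k i (d+1)).continuousAt).continuousWithinAt
    exact (ht.mul (ih i)).add (hs.mul (ih (i+1)))

lemma NJ_core0 (a b x : ℝ) (hab : a ≤ b) :
    (if a ≤ x ∧ x < b then (1:ℝ) else 0) - (if a < x ∧ x ≤ b then 1 else 0) =
    (if b = x ∧ b = x ∧ a < x then (-1:ℝ) else 0) +
      (if a = x ∧ a = x ∧ x < b then 1 else 0) := by
  rcases lt_trichotomy a x with h1 | h1 | h1
  · rcases lt_trichotomy x b with h2 | h2 | h2
    · rw [if_pos (show a ≤ x ∧ x < b from ⟨le_of_lt h1, h2⟩),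
        if_pos (show a < x ∧ x ≤ b from ⟨h1, le_of_lt h2⟩),
        if_neg (show ¬(b = x ∧ b = x ∧ a < x) by rintro ⟨h, -, -⟩; linarith),
        if_neg (show ¬(a = x ∧ a = x ∧ x < b) by rintro ⟨h, -, -⟩; linarith)]
      norm_num
    · rw [if_neg (show ¬(a ≤ x ∧ x < b) by rintro ⟨-, h⟩; linarith),
        if_pos (show a < x ∧ x ≤ b from ⟨h1, le_of_eq h2⟩),
        if_pos (show b = x ∧ b = x ∧ a < x from ⟨h2.symm, h2.symm, h1⟩),
        if_neg (show ¬(a = x ∧ a = x ∧ x < b) by rintro ⟨h, -, -⟩; linarith)]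
      norm_num
    · rw [if_neg (show ¬(a ≤ x ∧ x < b) by rintro ⟨-, h⟩; linarith),
        if_neg (show ¬(a < x ∧ x ≤ b) by rintro ⟨-, h⟩; linarith),
        if_neg (show ¬(b = x ∧ b = x ∧ a < x) by rintro ⟨h, -, -⟩; linarith),
        if_neg (show ¬(a = x ∧ a = x ∧ x < b) by rintro ⟨-, -, h⟩; linarith)]
      norm_num
  · rcases lt_trichotomy x b with h2 | h2 | h2
    · rw [if_pos (show a ≤ x ∧ x < b from ⟨le_of_eq h1, h2⟩),
        if_neg (show ¬(a < x ∧ x ≤ b) by rintro ⟨h, -⟩; linarith),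
        if_neg (show ¬(b = x ∧ b = x ∧ a < x) by rintro ⟨h, -, -⟩; linarith),
        if_pos (show a = x ∧ a = x ∧ x < b from ⟨h1, h1, h2⟩)]
      norm_num
    · rw [if_neg (show ¬(a ≤ x ∧ x < b) by rintro ⟨-, h⟩; linarith),
        if_neg (show ¬(a < x ∧ x ≤ b) by rintro ⟨h, -⟩; linarith),
        if_neg (show ¬(b = x ∧ b = x ∧ a < x) by rintro ⟨-, -, h⟩; linarith),
        if_neg (show ¬(a = x ∧ a = x ∧ x < b) by rintro ⟨-, -, h⟩; linarith)]
      norm_num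
    · linarith
  · rw [if_neg (show ¬(a ≤ x ∧ x < b) by rintro ⟨h, -⟩; linarith),
      if_neg (show ¬(a < x ∧ x ≤ b) by rintro ⟨h, -⟩; linarith),
      if_neg (show ¬(b = x ∧ b = x ∧ a < x) by rintro ⟨-, -, h⟩; linarith),
      if_neg (show ¬(a = x ∧ a = x ∧ x < b) by rintro ⟨h, -, -⟩; linarith)]
    norm_num

lemma NJ_core (a b c d e f x : ℝ) (hab : a ≤ b) (hbc : b ≤ c) (hcf : c ≤ f)
    (had : a ≤ d) (hde : d ≤ e) (hef : e ≤ f) (hbe : b ≤ e) :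
    ((if f = x ∧ b = x ∧ a < x then (-1:ℝ) else 0) +
      (if a = x ∧ e = x ∧ x < f then 1 else 0)) =
    (if e ≠ a then (x - a)/(e - a) else 0) *
      ((if e = x ∧ b = x ∧ a < x then (-1:ℝ) else 0) +
        (if a = x ∧ d = x ∧ x < e then 1 else 0)) +
    (if f ≠ b then (f - x)/(f - b) else 0) *
      ((if f = x ∧ c = x ∧ b < x then (-1:ℝ) else 0) +
        (if b = x ∧ e = x ∧ x < f then 1 else 0)) := by
  by_cases hb : b = x
  · by_cases he : e = x
    · by_cases ha : a = x
      · by_cases hf : x < f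
        · rw [if_neg (show ¬(f = x ∧ b = x ∧ a < x) by rintro ⟨-, -, h⟩; linarith),
            if_pos (show a = x ∧ e = x ∧ x < f from ⟨ha, he, hf⟩),
            if_neg (show ¬(e ≠ a) from not_not.2 (he.trans ha.symm)),
            if_neg (show ¬(e = x ∧ b = x ∧ a < x) by rintro ⟨-, -, h⟩; linarith),
            if_neg (show ¬(a = x ∧ d = x ∧ x < e) by rintro ⟨-, -, h⟩; linarith),
            if_pos (show f ≠ b by rw [hb]; exact ne_of_gt hf),
            if_neg (show ¬(f = x ∧ c = x ∧ b < x) by rintro ⟨-, -, h⟩; linarith),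
            if_pos (show b = x ∧ e = x ∧ x < f from ⟨hb, he, hf⟩)]
          rw [hb]
          have h2 : f - x ≠ 0 := sub_ne_zero.2 (ne_of_gt hf)
          field_simp
          norm_num
        · have hfx : f = x := le_antisymm (not_lt.1 hf) (he ▸ hef)
          rw [if_neg (show ¬(f = x ∧ b = x ∧ a < x) by rintro ⟨-, -, h⟩; linarith),
            if_neg (show ¬(a = x ∧ e = x ∧ x < f) by rintro ⟨-, -, h⟩; linarith),
            if_neg (show ¬(e ≠ a) from not_not.2 (he.trans ha.symm)),
            if_neg (show ¬(e = x ∧ b = x ∧ a < x) by rintro ⟨-, -, h⟩; linarith),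
            if_neg (show ¬(a = x ∧ d = x ∧ x < e) by rintro ⟨-, -, h⟩; linarith),
            if_neg (show ¬(f ≠ b) from not_not.2 (hfx.trans hb.symm)),
            if_neg (show ¬(f = x ∧ c = x ∧ b < x) by rintro ⟨-, -, h⟩; linarith),
            if_neg (show ¬(b = x ∧ e = x ∧ x < f) by rintro ⟨-, -, h⟩; linarith)]
          ring
      · have hax : a < x := lt_of_le_of_ne (hb ▸ hab) ha
        have hea : e ≠ a := by rw [he]; exact fun h => ha h.symm
        by_cases hf : x < f
        · rw [if_neg (show ¬(f = x ∧ b = x ∧ a < x) by rintro ⟨h, -, -⟩; linarith),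
            if_neg (show ¬(a = x ∧ e = x ∧ x < f) by rintro ⟨h, -, -⟩; exact ha h),
            if_pos (show e ≠ a from hea),
            if_pos (show e = x ∧ b = x ∧ a < x from ⟨he, hb, hax⟩),
            if_neg (show ¬(a = x ∧ d = x ∧ x < e) by rintro ⟨h, -, -⟩; exact ha h),
            if_pos (show f ≠ b by rw [hb]; exact ne_of_gt hf),
            if_neg (show ¬(f = x ∧ c = x ∧ b < x) by rintro ⟨h, -, -⟩; linarith),
            if_pos (show b = x ∧ e = x ∧ x < f from ⟨hb, he, hf⟩)]
          rw [he, hb]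
          have h1 : x - a ≠ 0 := sub_ne_zero.2 (ne_of_gt hax)
          have h2 : f - x ≠ 0 := sub_ne_zero.2 (ne_of_gt hf)
          field_simp
          norm_num
        · have hfx : f = x := le_antisymm (not_lt.1 hf) (he ▸ hef)
          rw [if_pos (show f = x ∧ b = x ∧ a < x from ⟨hfx, hb, hax⟩),
            if_neg (show ¬(a = x ∧ e = x ∧ x < f) by rintro ⟨h, -, -⟩; exact ha h),
            if_pos (show e ≠ a from hea),
            if_pos (show e = x ∧ b = x ∧ a < x from ⟨he, hb, hax⟩),
            if_neg (show ¬(a = x ∧ d = x ∧ x < e) by rintro ⟨h, -, -⟩; exact ha h),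
            if_neg (show ¬(f ≠ b) from not_not.2 (hfx.trans hb.symm)),
            if_neg (show ¬(f = x ∧ c = x ∧ b < x) by rintro ⟨-, -, h⟩; linarith),
            if_neg (show ¬(b = x ∧ e = x ∧ x < f) by rintro ⟨-, -, h⟩; linarith)]
          rw [he]
          have h1 : x - a ≠ 0 := sub_ne_zero.2 (ne_of_gt hax)
          field_simp
          norm_num
    · have hex : x < e := lt_of_le_of_ne (hb ▸ hbe) (Ne.symm he)
      have hfx : x < f := lt_of_lt_of_le hex hef
      have hea : e ≠ a := ne_of_gt (lt_of_le_of_lt (le_of_le_of_eq hab hb) hex)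
      have hfb : f ≠ b := by rw [hb]; exact ne_of_gt hfx
      rw [if_neg (show ¬(f = x ∧ b = x ∧ a < x) by rintro ⟨h, -, -⟩; linarith),
        if_neg (show ¬(a = x ∧ e = x ∧ x < f) by rintro ⟨-, h, -⟩; exact he h),
        if_pos (show e ≠ a from hea),
        if_neg (show ¬(e = x ∧ b = x ∧ a < x) by rintro ⟨h, -, -⟩; exact he h),
        if_pos (show f ≠ b from hfb),
        if_neg (show ¬(f = x ∧ c = x ∧ b < x) by rintro ⟨h, -, -⟩; linarith),
        if_neg (show ¬(b = x ∧ e = x ∧ x < f) by rintro ⟨-, h, -⟩; exact he h)]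
      by_cases had2 : a = x ∧ d = x
      · rw [if_pos (show a = x ∧ d = x ∧ x < e from ⟨had2.1, had2.2, hex⟩), had2.1]
        simp
      · rw [if_neg (show ¬(a = x ∧ d = x ∧ x < e) by rintro ⟨h1, h2, -⟩; exact had2 ⟨h1, h2⟩)]
        ring
  · by_cases hb2 : b < x
    · have hax : a < x := lt_of_le_of_lt hab hb2
      rw [if_neg (show ¬(f = x ∧ b = x ∧ a < x) by rintro ⟨-, h, -⟩; exact hb h),
        if_neg (show ¬(a = x ∧ e = x ∧ x < f) by rintro ⟨h, -, -⟩; linarith),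
        if_neg (show ¬(e = x ∧ b = x ∧ a < x) by rintro ⟨-, h, -⟩; exact hb h),
        if_neg (show ¬(a = x ∧ d = x ∧ x < e) by rintro ⟨h, -, -⟩; linarith),
        if_neg (show ¬(b = x ∧ e = x ∧ x < f) by rintro ⟨h, -, -⟩; exact hb h)]
      by_cases hcf2 : f = x ∧ c = x
      · rw [if_pos (show f = x ∧ c = x ∧ b < x from ⟨hcf2.1, hcf2.2, hb2⟩),
          if_pos (show f ≠ b by rw [hcf2.1]; exact ne_of_gt hb2), hcf2.1]
        simp
      · rw [if_neg (show ¬(f = x ∧ c = x ∧ b < x) by rintro ⟨h1, h2, -⟩; exact hcf2 ⟨h1, h2⟩)]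
        ring
    · have hbx : x < b := lt_of_le_of_ne (not_lt.1 hb2) (Ne.symm hb)
      have hex : x < e := lt_of_lt_of_le hbx hbe
      have hfx : x < f := lt_of_lt_of_le hbx (le_trans hbe hef)
      rw [if_neg (show ¬(f = x ∧ b = x ∧ a < x) by rintro ⟨-, h, -⟩; exact hb h),
        if_neg (show ¬(a = x ∧ e = x ∧ x < f) by rintro ⟨-, h, -⟩; linarith),
        if_neg (show ¬(e = x ∧ b = x ∧ a < x) by rintro ⟨-, h, -⟩; exact hb h),
        if_neg (show ¬(f = x ∧ c = x ∧ b < x) by rintro ⟨-, -, h⟩; linarith),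
        if_neg (show ¬(b = x ∧ e = x ∧ x < f) by rintro ⟨h, -, -⟩; exact hb h)]
      by_cases had2 : a = x ∧ d = x
      · rw [if_pos (show a = x ∧ d = x ∧ x < e from ⟨had2.1, had2.2, hex⟩),
          if_pos (show e ≠ a by rw [had2.1]; exact ne_of_gt hex), had2.1]
        simp
      · rw [if_neg (show ¬(a = x ∧ d = x ∧ x < e) by rintro ⟨h1, h2, -⟩; exact had2 ⟨h1, h2⟩)]
        ring

noncomputable def NJ (k : ℕ → ℝ) (x : ℝ) (r i : ℕ) : ℝ :=
  (if k (i + r + 1) = x ∧ k (i + 1) = x ∧ k i < x then (-1 : ℝ) else 0) +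
  (if k i = x ∧ k (i + r) = x ∧ x < k (i + r + 1) then 1 else 0)

lemma NJ_step (k : ℕ → ℝ) (hk : Monotone k) (x : ℝ) (r i : ℕ) :
    NJ k x (r+1) i =
      coxTau k i (r+1) x * NJ k x r i + coxSigma k i (r+1) x * NJ k x r (i+1) := by
  simp only [NJ, coxTau, coxSigma,
    show i + (r+1) = i + r + 1 from rfl,
    show i + (r+1) + 1 = i + r + 2 from rfl,
    show i + 1 + r = i + r + 1 by omega,
    show i + 1 + r + 1 = i + r + 2 by omega,
    show i + 1 + 1 = i + 2 from rfl,
    show i + r + 1 + 1 = i + r + 2 from rfl]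
  exact NJ_core (k i) (k (i+1)) (k (i+2)) (k (i+r)) (k (i+r+1)) (k (i+r+2)) x
    (hk (by omega)) (hk (by omega)) (hk (by omega)) (hk (by omega)) (hk (by omega))
    (hk (by omega)) (hk (by omega))

lemma Bspline_jump (k : ℕ → ℝ) (hk : Monotone k) (x : ℝ) :
    ∀ (d i : ℕ), Bspline k d i x - BsplineL k x d i = NJ k x d i := by
  intro d
  induction d with
  | zero =>
    intro i
    show (if k i ≤ x ∧ x < k (i+1) then (1:ℝ) else 0) -
      (if k i < x ∧ x ≤ k (i+1) then 1 else 0) = NJ k x 0 i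
    simp only [NJ, show i + 0 + 1 = i + 1 from rfl, show i + 0 = i from rfl]
    exact NJ_core0 (k i) (k (i+1)) x (hk (by omega))
  | succ d ih =>
    intro i
    show (coxTau k i (d+1) x * Bspline k d i x + coxSigma k i (d+1) x * Bspline k d (i+1) x) -
      (coxTau k i (d+1) x * BsplineL k x d i + coxSigma k i (d+1) x * BsplineL k x d (i+1)) =
      NJ k x (d+1) i
    rw [NJ_step k hk x d i, ← ih i, ← ih (i+1)]
    ring

lemma Bspline_continuousAt (k : ℕ → ℝ) (hk : Monotone k) (d i : ℕ) (x : ℝ)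
    (h1 : ¬(k (i + d + 1) = x ∧ k (i + 1) = x ∧ k i < x))
    (h2 : ¬(k i = x ∧ k (i + d) = x ∧ x < k (i + d + 1))) :
    ContinuousAt (Bspline k d i) x := by
  have hj := Bspline_jump k hk x d i
  have hNJ : NJ k x d i = 0 := by
    simp only [NJ]
    rw [if_neg h1, if_neg h2, add_zero]
  have hL : BsplineL k x d i = Bspline k d i x := by rw [hNJ] at hj; linarith
  rw [ContinuousAt, ← nhdsLT_sup_nhdsGE x, tendsto_sup]
  exact ⟨hL ▸ Bspline_left_limit k d i x, Bspline_right_continuous k d i x⟩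

noncomputable def coxC (k : ℕ → ℝ) (i d : ℕ) : ℝ :=
  if k (i + d) ≠ k i then (d : ℝ) / (k (i + d) - k i) else 0

lemma coxTau_hasDerivAt (k : ℕ → ℝ) (i q : ℕ) (s : ℝ) :
    HasDerivAt (coxTau k i q)
      (if k (i + q) ≠ k i then 1 / (k (i + q) - k i) else 0) s := by
  unfold coxTau
  by_cases h : k (i + q) ≠ k i
  · simp only [if_pos h]
    simpa using ((hasDerivAt_id s).sub_const (k i)).div_const (k (i + q) - k i)
  · simp only [if_neg h]
    exact hasDerivAt_const s 0

lemma coxSigma_hasDerivAt (k : ℕ → ℝ) (i q : ℕ) (s : ℝ) :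
    HasDerivAt (coxSigma k i q)
      (if k (i + q + 1) ≠ k (i + 1) then -(1 / (k (i + q + 1) - k (i + 1))) else 0) s := by
  unfold coxSigma
  by_cases h : k (i + q + 1) ≠ k (i + 1)
  · simp only [if_pos h]
    have := ((hasDerivAt_id s).const_sub (k (i + q + 1))).div_const (k (i + q + 1) - k (i + 1))
    simpa [neg_div] using this
  · simp only [if_neg h]
    exact hasDerivAt_const s 0

lemma Bspline0_eventuallyEq (k : ℕ → ℝ) (i : ℕ) (s : ℝ) (h0 : k i ≠ s) (h1 : k (i + 1) ≠ s) :
    ∀ᶠ t in 𝓝 s, Bspline k 0 i t = Bspline k 0 i s := by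
  by_cases h : k i ≤ s ∧ s < k (i + 1)
  · have h0' : k i < s := lt_of_le_of_ne h.1 h0
    filter_upwards [Ioo_mem_nhds h0' h.2] with t ht
    show (if k i ≤ t ∧ t < k (i+1) then (1:ℝ) else 0) = (if k i ≤ s ∧ s < k (i+1) then 1 else 0)
    rw [if_pos ⟨le_of_lt ht.1, ht.2⟩, if_pos h]
  · rcases not_and_or.1 h with h' | h'
    · have : s < k i := lt_of_not_ge h'
      filter_upwards [Iio_mem_nhds this] with t ht
      show (if k i ≤ t ∧ t < k (i+1) then (1:ℝ) else 0) = (if k i ≤ s ∧ s < k (i+1) then 1 else 0)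
      rw [if_neg (by rintro ⟨a, -⟩; exact absurd a (not_le.2 ht)), if_neg h]
    · have : k (i+1) < s := lt_of_le_of_ne (not_lt.1 h') h1
      filter_upwards [Ioi_mem_nhds this] with t ht
      show (if k i ≤ t ∧ t < k (i+1) then (1:ℝ) else 0) = (if k i ≤ s ∧ s < k (i+1) then 1 else 0)
      rw [if_neg (by rintro ⟨-, b⟩; exact absurd ht (not_lt.2 (le_of_lt b))), if_neg h]

lemma Bspline_hasDerivAt_offknot (k : ℕ → ℝ) (hk : Monotone k) (M : ℕ) :
    ∀ (d i : ℕ) (s : ℝ), (∀ j, j ≤ M → k j ≠ s) → i + d + 2 ≤ M →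
    HasDerivAt (Bspline k (d+1) i)
      (coxC k i (d+1) * Bspline k d i s - coxC k (i+1) (d+1) * Bspline k d (i+1) s) s := by
  intro d
  induction d with
  | zero =>
    intro i s hs hle
    have h0 : HasDerivAt (fun t => coxTau k i 1 t * Bspline k 0 i t)
        ((if k (i + 1) ≠ k i then 1 / (k (i + 1) - k i) else 0) * Bspline k 0 i s) s := by
      refine ((coxTau_hasDerivAt k i 1 s).mul_const (Bspline k 0 i s)).congr_of_eventuallyEq ?_
      filter_upwards [Bspline0_eventuallyEq k i s (hs i (by omega)) (hs (i+1) (by omega))]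
        with t ht
      rw [ht]
    have h1 : HasDerivAt (fun t => coxSigma k i 1 t * Bspline k 0 (i+1) t)
        ((if k (i + 1 + 1) ≠ k (i + 1) then -(1 / (k (i + 1 + 1) - k (i + 1))) else 0) *
          Bspline k 0 (i+1) s) s := by
      refine ((coxSigma_hasDerivAt k i 1 s).mul_const (Bspline k 0 (i+1) s)).congr_of_eventuallyEq ?_
      filter_upwards [Bspline0_eventuallyEq k (i+1) s (hs (i+1) (by omega)) (hs (i+1+1) (by omega))]
        with t ht
      rw [ht]
    have H := h0.add h1
    have hfun : (fun t => coxTau k i 1 t * Bspline k 0 i t +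
        coxSigma k i 1 t * Bspline k 0 (i+1) t) = Bspline k (0+1) i := by
      funext t; rfl
    change HasDerivAt (Bspline k (0+1) i) _ _ at H
    have heq : (if k (i + 1) ≠ k i then 1 / (k (i + 1) - k i) else 0) * Bspline k 0 i s +
        (if k (i + 1 + 1) ≠ k (i + 1) then -(1 / (k (i + 1 + 1) - k (i + 1))) else 0) *
          Bspline k 0 (i+1) s =
        coxC k i (0+1) * Bspline k 0 i s - coxC k (i+1) (0+1) * Bspline k 0 (i+1) s := by
      have hc : coxC k i (0+1) = (if k (i + 1) ≠ k i then 1 / (k (i + 1) - k i) else 0) := by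
        by_cases h : k (i + 1) ≠ k i <;> simp [coxC, h]
      have hc' : coxC k (i+1) (0+1) =
          (if k (i + 1 + 1) ≠ k (i + 1) then 1 / (k (i + 1 + 1) - k (i + 1)) else 0) := by
        by_cases h : k (i + 1 + 1) ≠ k (i + 1) <;> simp [coxC, h]
      rw [hc, hc']
      by_cases h1 : k (i + 1) ≠ k i <;> by_cases h2 : k (i + 1 + 1) ≠ k (i + 1) <;>
        simp [h1, h2] <;> ring
    rwa [heq] at H
  | succ d ih =>
    intro i s hs hle
    have IH0 := ih i s hs (by omega)
    have IH1 := ih (i+1) s hs (by omega)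
    have H := ((coxTau_hasDerivAt k i (d+2) s).mul IH0).add
      ((coxSigma_hasDerivAt k i (d+2) s).mul IH1)
    have hfun : (fun t => coxTau k i (d+2) t * Bspline k (d+1) i t +
        coxSigma k i (d+2) t * Bspline k (d+1) (i+1) t) = Bspline k (d+1+1) i := by
      funext t; rfl
    change HasDerivAt (Bspline k (d+1+1) i) _ _ at H
    have e0 : Bspline k (d+1) i s =
        coxTau k i (d+1) s * Bspline k d i s + coxSigma k i (d+1) s * Bspline k d (i+1) s := rfl
    have e1 : Bspline k (d+1) (i+1) s =
        coxTau k (i+1) (d+1) s * Bspline k d (i+1) s +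
          coxSigma k (i+1) (d+1) s * Bspline k d (i+1+1) s := rfl
    -- degeneracy-or-cancellation lemmas
    have P1 : ((if k (i + (d+2)) ≠ k i then 1 / (k (i + (d+2)) - k i) else 0) *
          coxTau k i (d+1) s + coxTau k i (d+2) s * coxC k i (d+1) -
          coxC k i (d+2) * coxTau k i (d+1) s) * Bspline k d i s = 0 := by
      by_cases hB : k (i + d + 1) = k i
      · rw [Bspline_zero_of_collapse k hk d i hB s, mul_zero]
      · apply mul_eq_zero_of_left
        have hBgt : k i < k (i + d + 1) := lt_of_le_of_ne (hk (by omega)) (Ne.symm hB)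
        have hAgt : k i < k (i + d + 2) := lt_of_lt_of_le hBgt (hk (by omega))
        have hBne : k (i + d + 1) ≠ k i := Ne.symm (ne_of_lt hBgt)
        have hAne : k (i + d + 2) ≠ k i := Ne.symm (ne_of_lt hAgt)
        have d1 : k (i + d + 1) - k i ≠ 0 := sub_ne_zero.2 hBne
        have d2 : k (i + d + 2) - k i ≠ 0 := sub_ne_zero.2 hAne
        simp only [coxTau, coxSigma, coxC,
          show i + (d+2) = i + d + 2 from rfl, show i + (d+1) = i + d + 1 from rfl]
        split_ifs <;> first
          | (exfalso; tauto)
          | (field_simp; push_cast; ring)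
    have P2 : ((if k (i + (d+2) + 1) ≠ k (i + 1) then -(1 / (k (i + (d+2) + 1) - k (i + 1))) else 0) *
          coxSigma k (i+1) (d+1) s - coxSigma k i (d+2) s * coxC k (i+1+1) (d+1) +
          coxC k (i+1) (d+2) * coxSigma k (i+1) (d+1) s) * Bspline k d (i+1+1) s = 0 := by
      by_cases hD : k (i + d + 3) = k (i + 2)
      · rw [Bspline_zero_of_collapse k hk d (i+1+1)
          (by rw [show i+1+1+d+1 = i + d + 3 by omega]; exact hD) s, mul_zero]
      · apply mul_eq_zero_of_left
        have hDgt : k (i + 2) < k (i + d + 3) := lt_of_le_of_ne (hk (by omega)) (Ne.symm hD)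
        have hCgt : k (i + 1) < k (i + d + 3) := lt_of_le_of_lt (hk (by omega)) hDgt
        have hCne : k (i + d + 3) ≠ k (i + 1) := Ne.symm (ne_of_lt hCgt)
        have hDne : k (i + d + 3) ≠ k (i + 2) := Ne.symm (ne_of_lt hDgt)
        have d1 : k (i + d + 3) - k (i + 1) ≠ 0 := sub_ne_zero.2 hCne
        have d2 : k (i + d + 3) - k (i + 2) ≠ 0 := sub_ne_zero.2 hDne
        simp only [coxTau, coxSigma, coxC,
          show i + (d+2) + 1 = i + d + 3 from rfl,
          show i + 1 + (d+1) + 1 = i + d + 3 by omega,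
          show i + 1 + 1 + (d+1) = i + d + 3 by omega,
          show i + 1 + (d+2) = i + d + 3 by omega,
          show i + 1 + 1 = i + 2 from rfl]
        split_ifs <;> first
          | (exfalso; tauto)
          | (field_simp; push_cast; ring)
    have P3 : ((if k (i + (d+2)) ≠ k i then 1 / (k (i + (d+2)) - k i) else 0) *
          coxSigma k i (d+1) s - coxTau k i (d+2) s * coxC k (i+1) (d+1) +
          (if k (i + (d+2) + 1) ≠ k (i + 1) then -(1 / (k (i + (d+2) + 1) - k (i + 1))) else 0) *
            coxTau k (i+1) (d+1) s +
          coxSigma k i (d+2) s * coxC k (i+1) (d+1) - coxC k i (d+2) * coxSigma k i (d+1) s +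
          coxC k (i+1) (d+2) * coxTau k (i+1) (d+1) s) * Bspline k d (i+1) s = 0 := by
      by_cases hE : k (i + d + 2) = k (i + 1)
      · rw [Bspline_zero_of_collapse k hk d (i+1)
          (by rw [show i+1+d+1 = i + d + 2 by omega]; exact hE) s, mul_zero]
      · apply mul_eq_zero_of_left
        have hEgt : k (i + 1) < k (i + d + 2) := lt_of_le_of_ne (hk (by omega)) (Ne.symm hE)
        have hAgt : k i < k (i + d + 2) := lt_of_le_of_lt (hk (by omega)) hEgt
        have hCgt : k (i + 1) < k (i + d + 3) := lt_of_lt_of_le hEgt (hk (by omega))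
        have hAne : k (i + d + 2) ≠ k i := Ne.symm (ne_of_lt hAgt)
        have hEne : k (i + d + 2) ≠ k (i + 1) := Ne.symm (ne_of_lt hEgt)
        have hCne : k (i + d + 3) ≠ k (i + 1) := Ne.symm (ne_of_lt hCgt)
        have d1 : k (i + d + 2) - k (i + 1) ≠ 0 := sub_ne_zero.2 hEne
        have d2 : k (i + d + 2) - k i ≠ 0 := sub_ne_zero.2 hAne
        have d3 : k (i + d + 3) - k (i + 1) ≠ 0 := sub_ne_zero.2 hCne
        simp only [coxTau, coxSigma, coxC,
          show i + (d+2) = i + d + 2 from rfl,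
          show i + (d+1) + 1 = i + d + 2 from rfl,
          show i + (d+2) + 1 = i + d + 3 from rfl,
          show i + 1 + (d+1) = i + d + 2 by omega,
          show i + 1 + (d+2) = i + d + 3 by omega]
        split_ifs <;> first
          | (exfalso; tauto)
          | (field_simp; push_cast; ring)
    have heq : (if k (i + (d+2)) ≠ k i then 1 / (k (i + (d+2)) - k i) else 0) *
          Bspline k (d+1) i s +
        coxTau k i (d+2) s *
          (coxC k i (d+1) * Bspline k d i s - coxC k (i+1) (d+1) * Bspline k d (i+1) s) +
        ((if k (i + (d+2) + 1) ≠ k (i + 1) then -(1 / (k (i + (d+2) + 1) - k (i + 1))) else 0) *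
          Bspline k (d+1) (i+1) s +
         coxSigma k i (d+2) s *
          (coxC k (i+1) (d+1) * Bspline k d (i+1) s - coxC k (i+1+1) (d+1) * Bspline k d (i+1+1) s)) =
        coxC k i (d+1+1) * Bspline k (d+1) i s - coxC k (i+1) (d+1+1) * Bspline k (d+1) (i+1) s := by
      rw [e0, e1]
      have hnorm : coxC k i (d+1+1) = coxC k i (d+2) := rfl
      have hnorm' : coxC k (i+1) (d+1+1) = coxC k (i+1) (d+2) := rfl
      rw [hnorm, hnorm']
      linear_combination P1 + P2 + P3
    rwa [heq] at H

lemma hasDerivAt_of_local {f g : ℝ → ℝ} {a ε : ℝ} (hε : 0 < ε)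
    (hd : ∀ y, y ≠ a → |y - a| < ε → HasDerivAt f (g y) y)
    (hf : ContinuousAt f a) (hg : ContinuousAt g a) : HasDerivAt f (g a) a := by
  have A : HasDerivWithinAt f (g a) (Ici a) a := by
    have diff : DifferentiableOn ℝ f (Ioo a (a + ε)) := fun y hy =>
      (hd y (ne_of_gt hy.1) (by rw [abs_of_pos (by linarith [hy.1])]; linarith [hy.2])
        ).differentiableAt.differentiableWithinAt
    apply hasDerivWithinAt_Ici_of_tendsto_deriv diff hf.continuousWithinAt
      (Ioo_mem_nhdsGT_of_mem ⟨le_refl a, by linarith⟩)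
    have htg : Tendsto g (𝓝[>] a) (𝓝 (g a)) := tendsto_inf_left hg
    apply htg.congr'
    filter_upwards [Ioo_mem_nhdsGT_of_mem (show a ∈ Ico a (a + ε) from ⟨le_refl a, by linarith⟩)]
      with y hy
    exact ((hd y (ne_of_gt hy.1)
      (by rw [abs_of_pos (by linarith [hy.1])]; linarith [hy.2])).deriv).symm
  have B : HasDerivWithinAt f (g a) (Iic a) a := by
    have diff : DifferentiableOn ℝ f (Ioo (a - ε) a) := fun y hy =>
      (hd y (ne_of_lt hy.2) (by rw [abs_of_neg (by linarith [hy.2])]; linarith [hy.1])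
        ).differentiableAt.differentiableWithinAt
    apply hasDerivWithinAt_Iic_of_tendsto_deriv diff hf.continuousWithinAt
      (Ioo_mem_nhdsLT_of_mem ⟨by linarith, le_refl a⟩)
    have htg : Tendsto g (𝓝[<] a) (𝓝 (g a)) := tendsto_inf_left hg
    apply htg.congr'
    filter_upwards [Ioo_mem_nhdsLT_of_mem (show a ∈ Ioc (a - ε) a from ⟨by linarith, le_refl a⟩)]
      with y hy
    exact ((hd y (ne_of_lt hy.2)
      (by rw [abs_of_neg (by linarith [hy.2])]; linarith [hy.1])).deriv).symm
  simpa using B.union A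

lemma Bspline_hasDerivAt_all (k : ℕ → ℝ) (hk : Monotone k) (M d i : ℕ)
    (hle : i + d + 2 ≤ M)
    (hc0 : Continuous (Bspline k d i)) (hc1 : Continuous (Bspline k d (i+1))) (s : ℝ) :
    HasDerivAt (Bspline k (d+1) i)
      (coxC k i (d+1) * Bspline k d i s - coxC k (i+1) (d+1) * Bspline k d (i+1) s) s := by
  have hgc : Continuous (fun t => coxC k i (d+1) * Bspline k d i t -
      coxC k (i+1) (d+1) * Bspline k d (i+1) t) :=
    (continuous_const.mul hc0).sub (continuous_const.mul hc1)
  have hfc : Continuous (Bspline k (d+1) i) := Bspline_continuous_of k d i hc0 hc1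
  by_cases hknot : ∀ j, j ≤ M → k j ≠ s
  · exact Bspline_hasDerivAt_offknot k hk M d i s hknot hle
  · set T := ((Finset.range (M+1)).image k).filter (fun t => t ≠ s) with hT
    have key : ∀ y : ℝ, y ≠ s → (∀ t ∈ T, ¬(|t - s| ≤ |y - s|)) → ∀ j, j ≤ M → k j ≠ y := by
      intro y hy hfar j hj heq
      have hmem : k j ∈ T := by
        rw [hT]
        refine Finset.mem_filter.2 ⟨Finset.mem_image.2 ⟨j, Finset.mem_range.2 (by omega), rfl⟩, ?_⟩
        rw [heq]; exact hy
      exact hfar _ hmem (by rw [heq])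
    by_cases hTne : T.Nonempty
    · set ε := T.inf' hTne (fun t => |t - s|) with hε
      have hεpos : 0 < ε := by
        rw [hε, Finset.lt_inf'_iff]
        intro t ht
        exact abs_pos.2 (sub_ne_zero.2 (Finset.mem_filter.1 ht).2)
      apply hasDerivAt_of_local hεpos ?_ hfc.continuousAt hgc.continuousAt
      intro y hy hdist
      apply Bspline_hasDerivAt_offknot k hk M d i y ?_ hle
      apply key y hy
      intro t ht hle'
      have : ε ≤ |t - s| := Finset.inf'_le _ ht
      linarith
    · apply hasDerivAt_of_local one_pos ?_ hfc.continuousAt hgc.continuousAt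
      intro y hy _
      apply Bspline_hasDerivAt_offknot k hk M d i y ?_ hle
      apply key y hy
      intro t ht _
      exact absurd ⟨t, ht⟩ hTne

lemma Bspline_continuous_of_mult (k : ℕ → ℝ) (hk : Monotone k) (M q d i : ℕ)
    (hqd : q ≤ d) (hle : i + d + 1 ≤ M)
    (hrep : ∀ x : ℝ, ((Finset.range (M+1)).filter fun j => k j = x).card ≤ q) :
    Continuous (Bspline k d i) := by
  rw [continuous_iff_continuousAt]
  intro x
  have hcard : ∀ (a b : ℕ), b = a + d → b ≤ M → k a = x → k b = x → False := by
    intro a b hab hbM ha hb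
    have hsub : Finset.Icc a b ⊆ (Finset.range (M+1)).filter (fun j => k j = x) := by
      intro j hj
      rw [Finset.mem_Icc] at hj
      refine Finset.mem_filter.2 ⟨Finset.mem_range.2 (by omega), ?_⟩
      exact le_antisymm (le_of_le_of_eq (hk hj.2) hb) (le_of_eq_of_le ha.symm (hk hj.1))
    have h1 := Finset.card_le_card hsub
    rw [Nat.card_Icc] at h1
    have := hrep x
    omega
  apply Bspline_continuousAt k hk d i x
  · rintro ⟨h1, h2, -⟩
    exact hcard (i+1) (i+d+1) (by omega) (by omega) h2 h1
  · rintro ⟨h1, h2, -⟩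
    exact hcard i (i+d) (by omega) (by omega) h1 h2

lemma Bspline_contDiff (k : ℕ → ℝ) (hk : Monotone k) (M q : ℕ)
    (hrep : ∀ x : ℝ, ((Finset.range (M+1)).filter fun j => k j = x).card ≤ q) :
    ∀ (m d i : ℕ), d = q + m → i + d + 1 ≤ M → ContDiff ℝ (m : ℕ∞) (Bspline k d i) := by
  intro m
  induction m with
  | zero =>
    intro d i hd hle
    have h0 : (((0:ℕ) : ℕ∞) : WithTop ℕ∞) = 0 := rfl
    rw [h0, contDiff_zero]
    exact Bspline_continuous_of_mult k hk M q d i (by omega) hle hrep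
  | succ m ih =>
    intro d i hd hle
    obtain ⟨e, rfl⟩ : ∃ e, d = e + 1 := ⟨q + m, by omega⟩
    have hc0 : Continuous (Bspline k e i) := (ih e i (by omega) (by omega)).continuous
    have hc1 : Continuous (Bspline k e (i+1)) := (ih e (i+1) (by omega) (by omega)).continuous
    have hder := fun s => Bspline_hasDerivAt_all k hk M e i (by omega) hc0 hc1 s
    have hdiff : Differentiable ℝ (Bspline k (e+1) i) := fun s => (hder s).differentiableAt
    have hderiv : deriv (Bspline k (e+1) i) = fun s =>
        coxC k i (e+1) * Bspline k e i s - coxC k (i+1) (e+1) * Bspline k e (i+1) s :=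
      funext fun s => (hder s).deriv
    have hcast : (((m+1 : ℕ) : ℕ∞) : WithTop ℕ∞) = (((m : ℕ) : ℕ∞) : WithTop ℕ∞) + 1 := by
      push_cast; rfl
    rw [hcast, contDiff_succ_iff_deriv]
    refine ⟨hdiff, by simp, ?_⟩
    rw [hderiv]
    exact (contDiff_const.mul (ih e i (by omega) (by omega))).sub
      (contDiff_const.mul (ih e (i+1) (by omega) (by omega)))

theorem bspline_continuity_repeated_knots (n p q : ℕ) (k : ℕ → ℝ)
    (hk : ∀ j, k j ≤ k (j + 1)) (hq1 : 1 ≤ q) (hqp : q ≤ p)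
    (hrep : ∀ x : ℝ, ((Finset.range (n + p + 1)).filter fun j => k j = x).card ≤ q)
    (i : ℕ) (hi : i + p + 1 ≤ n + p) :
    ContDiff ℝ ((p - q : ℕ) : ℕ∞) (fun s => Bspline k p i s) := by
  have hmono : Monotone k := monotone_nat_of_le_succ hk
  exact Bspline_contDiff k hmono (n + p) q hrep (p - q) p i (by omega) hi
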